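/- Over a commutative unital ring A, a quadruple (a,b,c,d) satisfies M_4(a,b,c,d) = ±Id if and only if either (c = -a, d = -b and a·b = 0_A), or (c = a, d = b and a·b = 2_A). -/

import Mathlib

open Matrix

/-- `Mlist [a₁,…,aₙ] = M(aₙ)⋯M(a₁)` where `M(a) = [[a,-1],[1,0]]`. -/
def Mlist {A : Type*} [CommRing A] (l : List A) : Matrix (Fin 2) (Fin 2) A :=
  ((l.map (fun a => !![a, -1; 1, 0])).reverse).prod

/-- The continuant `K` (tridiagonal determinant), with `K [] = 1`. -/
def cont {A : Type*} [CommRing A] : List A → A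
  | [] => 1
  | [a] => a
  | a :: b :: l => a * cont (b :: l) - cont l

/-- `(a₁,…,aₙ) ⊕ (b₁,…,bₘ) = (a₁+bₘ, a₂,…,aₙ₋₁, aₙ+b₁, b₂,…,bₘ₋₁)` (for lists of length ≥ 2). -/
def oplus {A : Type*} [CommRing A] (la lb : List A) : List A :=
  match la, lb with
  | a1 :: ta, b1 :: tb =>
      (a1 + tb.getLastD b1) :: (ta.dropLast ++ ((ta.getLastD a1 + b1) :: tb.dropLast))
  | _, _ => []

theorem stmt6 {A : Type*} [CommRing A] (a b c d : A) :
    (Mlist [a, b, c, d] = 1 ∨ Mlist [a, b, c, d] = -1) ↔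
      (c = -a ∧ d = -b ∧ a * b = 0) ∨ (c = a ∧ d = b ∧ a * b = 2) := by
  have key : Mlist [a, b, c, d] =
      !![(d*c-1)*(b*a-1)-d*a, -((d*c-1)*b)+d; c*(b*a-1)-a, -(c*b)+1] := by
    simp [Mlist]
    refine ⟨⟨?_, ?_⟩, ?_⟩ <;> ring
  rw [key]
  constructor
  · rintro (h | h)
    · left
      have e11 := congrFun (congrFun h 1) 1
      have e10 := congrFun (congrFun h 1) 0
      have e01 := congrFun (congrFun h 0) 1
      simp at e11 e10 e01
      have hc : c = -a := by linear_combination a * e11 - e10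
      have hd : d = -b := by linear_combination e01 + d * e11
      exact ⟨hc, hd, by linear_combination b * hc - e11⟩
    · right
      have e11 := congrFun (congrFun h 1) 1
      have e10 := congrFun (congrFun h 1) 0
      have e01 := congrFun (congrFun h 0) 1
      simp at e11 e10 e01
      have hcb : c * b = 2 := by linear_combination -e11
      have hc : c = a := by linear_combination a * hcb - e10
      have hd : d = b := by linear_combination -e01 - d * hcb
      exact ⟨hc, hd, by linear_combination hcb - b * hc⟩
  · rintro (⟨hc, hd, hab⟩ | ⟨hc, hd, hab⟩) <;> subst hc <;> subst hd
    · left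
      ext i j
      fin_cases i <;> fin_cases j <;> simp [Matrix.one_fin_two]
      · linear_combination (a * b - 1) * hab
      · linear_combination -b * hab
      · linear_combination -a * hab
      · linear_combination hab
    · right
      ext i j
      fin_cases i <;> fin_cases j <;> simp [Matrix.one_fin_two]
      · linear_combination (c * d - 1) * hab
      · linear_combination -d * hab
      · linear_combination c * hab
      · linear_combination -hab
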